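/- Let G be a connected graph on n ≥ 4 vertices. Then the sum-Balaban index SJ(G) = (m/(m−n+2)) · Σ_{uv∈E(G)} 1/√(w(u)+w(v)) satisfies SJ(G) ≥ 2√(n/(n−1)). -/

import Mathlib

open Finset

noncomputable def transmission {V : Type*} [Fintype V] (G : SimpleGraph V) (v : V) : ℕ :=
  ∑ x, G.dist v x

noncomputable def edgeTerm {V : Type*} [Fintype V] (G : SimpleGraph V) : Sym2 V → ℝ :=
  Sym2.lift ⟨fun u v => 1 / Real.sqrt ((transmission G u : ℝ) + transmission G v),
    by intro u v; simp [add_comm]⟩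

noncomputable def sumBalaban {V : Type*} [Fintype V] [DecidableEq V]
    (G : SimpleGraph V) [DecidableRel G.Adj] : ℝ :=
  ((G.edgeFinset.card : ℝ) / ((G.edgeFinset.card : ℝ) - (Fintype.card V : ℝ) + 2)) *
    ∑ e ∈ G.edgeFinset, edgeTerm G e

section helpers

variable {V : Type*} {G : SimpleGraph V}

lemma walk_take_exists {u v : V} (p : G.Walk u v) (i : ℕ) :
    ∃ q : G.Walk u (p.getVert i), q.length ≤ i := by
  induction p generalizing i with
  | nil =>
    exact ⟨SimpleGraph.Walk.nil.copy rfl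
      (SimpleGraph.Walk.getVert_of_length_le _ (Nat.zero_le i)).symm, by simp⟩
  | cons h q ih =>
    cases i with
    | zero =>
      exact ⟨SimpleGraph.Walk.nil.copy rfl (SimpleGraph.Walk.getVert_zero _).symm, by simp⟩
    | succ i =>
      obtain ⟨r, hr⟩ := ih i
      exact ⟨r.cons h, by simpa using Nat.succ_le_succ hr⟩

lemma walk_drop_exists {u v : V} (p : G.Walk u v) (i : ℕ) :
    ∃ q : G.Walk (p.getVert i) v, q.length ≤ p.length - i := by
  induction p generalizing i with
  | nil =>
    exact ⟨SimpleGraph.Walk.nil.copy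
      (SimpleGraph.Walk.getVert_of_length_le _ (Nat.zero_le i)).symm rfl, by simp⟩
  | cons h q ih =>
    cases i with
    | zero =>
      exact ⟨(q.cons h).copy (SimpleGraph.Walk.getVert_zero _).symm rfl, by simp⟩
    | succ i =>
      obtain ⟨r, hr⟩ := ih i
      exact ⟨r, by simpa using hr⟩

lemma dist_getVert_eq (hG : G.Connected) {v0 x : V} (p : G.Walk v0 x)
    (hp : p.length = G.dist v0 x) {i : ℕ} (hi : i ≤ p.length) :
    G.dist v0 (p.getVert i) = i := by
  obtain ⟨q, hq⟩ := walk_take_exists p i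
  obtain ⟨r, hr⟩ := walk_drop_exists p i
  have h1 : G.dist v0 (p.getVert i) ≤ i := le_trans (SimpleGraph.dist_le q) hq
  have h2 : G.dist (p.getVert i) x ≤ p.length - i := le_trans (SimpleGraph.dist_le r) hr
  have h3 := hG.dist_triangle (u := v0) (v := p.getVert i) (w := x)
  omega

lemma ball_card_ge (hG : G.Connected) [Fintype V] [DecidableEq V] (v0 : V) (r : ℕ) :
    min (r + 1) (Fintype.card V) ≤ (univ.filter fun x => G.dist v0 x ≤ r).card := by
  classical
  by_cases hall : ∀ x, G.dist v0 x ≤ r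
  · have he : (univ.filter fun x => G.dist v0 x ≤ r) = univ := by
      apply Finset.filter_true_of_mem; intro x _; exact hall x
    rw [he, Finset.card_univ]
    exact min_le_right _ _
  · push_neg at hall
    obtain ⟨x, hx⟩ := hall
    obtain ⟨p, hp⟩ := hG.exists_walk_length_eq_dist v0 x
    have hrp : r < p.length := by omega
    have hd : ∀ i : ℕ, i ≤ r → G.dist v0 (p.getVert i) = i := fun i hi =>
      dist_getVert_eq hG p hp (by omega)
    calc min (r + 1) (Fintype.card V) ≤ r + 1 := min_le_left _ _
      _ = (Finset.range (r + 1)).card := (Finset.card_range _).symm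
      _ ≤ (univ.filter fun x => G.dist v0 x ≤ r).card := by
          apply Finset.card_le_card_of_injOn (fun i => p.getVert i)
          · intro i hi
            simp only [Finset.mem_coe, Finset.mem_range] at hi
            simp only [Finset.mem_coe, Finset.mem_filter, Finset.mem_univ, true_and]
            rw [hd i (by omega)]; omega
          · intro i hi j hj hij
            simp only [Finset.coe_range, Set.mem_Iio] at hi hj
            have hij' : p.getVert i = p.getVert j := hij
            rw [← hd i (by omega), ← hd j (by omega), hij']

lemma two_transmission_le (hG : G.Connected) [Fintype V] [DecidableEq V] (v0 : V) :
    2 * transmission G v0 ≤ Fintype.card V * (Fintype.card V - 1) := by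
  classical
  set n := Fintype.card V with hn
  have hpos : 1 ≤ n := Fintype.card_pos_iff.mpr hG.nonempty
  have hdist_lt : ∀ x, G.dist v0 x < n := by
    intro x
    obtain ⟨p, hp, hlen⟩ := (hG v0 x).exists_path_of_dist
    rw [← hlen]; exact hp.length_lt
  have key : ∀ x : V, G.dist v0 x =
      ∑ k ∈ Finset.range (n - 1), if k < G.dist v0 x then 1 else 0 := by
    intro x
    have hfe : ((Finset.range (n - 1)).filter fun k => k < G.dist v0 x)
        = Finset.range (G.dist v0 x) := by
      ext k
      simp only [Finset.mem_filter, Finset.mem_range]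
      have := hdist_lt x
      omega
    calc G.dist v0 x = (Finset.range (G.dist v0 x)).card := (Finset.card_range _).symm
      _ = ((Finset.range (n - 1)).filter fun k => k < G.dist v0 x).card := by rw [hfe]
      _ = ∑ k ∈ Finset.range (n - 1), if k < G.dist v0 x then 1 else 0 :=
          Finset.card_filter _ _
  have hlayer : transmission G v0 = ∑ k ∈ Finset.range (n - 1),
      (univ.filter fun x => k < G.dist v0 x).card := by
    unfold transmission
    calc (∑ x, G.dist v0 x)
        = ∑ x, ∑ k ∈ Finset.range (n - 1), if k < G.dist v0 x then 1 else 0 :=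
          Finset.sum_congr rfl fun x _ => key x
      _ = ∑ k ∈ Finset.range (n - 1), ∑ x, if k < G.dist v0 x then 1 else 0 :=
          Finset.sum_comm
      _ = ∑ k ∈ Finset.range (n - 1), (univ.filter fun x => k < G.dist v0 x).card :=
          Finset.sum_congr rfl fun k _ => (Finset.card_filter _ _).symm
  have hbound : ∀ k ∈ Finset.range (n - 1),
      (univ.filter fun x => k < G.dist v0 x).card ≤ n - 1 - k := by
    intro k hk
    simp only [Finset.mem_range] at hk
    have hball := ball_card_ge hG v0 k
    have hsplit := Finset.card_filter_add_card_filter_not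
      (s := (univ : Finset V)) (p := fun x => G.dist v0 x ≤ k)
    have hneg : (univ.filter fun x => ¬ G.dist v0 x ≤ k)
        = (univ.filter fun x => k < G.dist v0 x) := by
      apply Finset.filter_congr; intro x _; simp [not_le]
    rw [hneg, Finset.card_univ] at hsplit
    have hmin : min (k + 1) n = k + 1 := by omega
    omega
  have hsum : transmission G v0 ≤ ∑ k ∈ Finset.range (n - 1), (n - 1 - k) := by
    rw [hlayer]; exact Finset.sum_le_sum hbound
  set m := n - 1 with hm
  have hrefl : ∑ k ∈ Finset.range m, (m - k) = ∑ k ∈ Finset.range m, (k + 1) := by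
    rw [← Finset.sum_range_reflect (fun k => k + 1) m]
    apply Finset.sum_congr rfl
    intro k hk
    simp only [Finset.mem_range] at hk
    omega
  have hgauss := Finset.sum_range_id_mul_two m
  have hfin : 2 * ∑ k ∈ Finset.range m, (m - k) ≤ n * (n - 1) := by
    rw [hrefl, Finset.sum_add_distrib, Finset.sum_const, Finset.card_range,
      smul_eq_mul, mul_one]
    have h1 : n * (n - 1) = (m + 1) * m := by
      rw [show n = m + 1 by omega]; simp
    have h2 : 2 * ((∑ k ∈ Finset.range m, k) + m) = m * (m - 1) + 2 * m := by omega
    rw [h2]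
    have h3 : m * (m - 1) + 2 * m = (m + 1) * m := by
      cases m with
      | zero => rfl
      | succ j => simp [Nat.succ_sub_one]; ring
    rw [h3, ← h1]
  calc 2 * transmission G v0 ≤ 2 * ∑ k ∈ Finset.range m, (m - k) := by
        have : ∑ k ∈ Finset.range (n - 1), (n - 1 - k) = ∑ k ∈ Finset.range m, (m - k) := rfl
        omega
    _ ≤ n * (n - 1) := hfin

lemma card_le_edges (hG : G.Connected) [Fintype V] [DecidableEq V] [DecidableRel G.Adj] :
    Fintype.card V - 1 ≤ G.edgeFinset.card := by
  classical
  obtain ⟨v0⟩ := hG.nonempty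
  have key : ∀ x : V, x ≠ v0 → ∃ z, G.Adj z x ∧ G.dist v0 z + 1 = G.dist v0 x := by
    intro x hx
    have hd : 0 < G.dist v0 x := hG.pos_dist_of_ne (Ne.symm hx)
    obtain ⟨p, hp⟩ := hG.exists_walk_length_eq_dist v0 x
    refine ⟨p.getVert (G.dist v0 x - 1), ?_, ?_⟩
    · have hadj := p.adj_getVert_succ (i := G.dist v0 x - 1) (by omega)
      have he : G.dist v0 x - 1 + 1 = p.length := by omega
      rw [he, p.getVert_length] at hadj
      exact hadj
    · rw [dist_getVert_eq hG p hp (by omega)]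
      omega
  let f : V → Sym2 V := fun x =>
    if h : x = v0 then s(v0, v0) else s((key x h).choose, x)
  have hcard : (univ.erase v0).card = Fintype.card V - 1 := by
    rw [Finset.card_erase_of_mem (Finset.mem_univ _), Finset.card_univ]
  rw [← hcard]
  apply Finset.card_le_card_of_injOn f
  · intro x hxx
    have hx : x ≠ v0 := Finset.ne_of_mem_erase hxx
    simp only [f, dif_neg hx, Finset.mem_coe, SimpleGraph.mem_edgeFinset, SimpleGraph.mem_edgeSet]
    exact (key x hx).choose_spec.1
  · intro x hxx y hyy hxy
    simp only [Finset.coe_erase, Set.mem_diff, Set.mem_singleton_iff] at hxx hyy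
    have hx : x ≠ v0 := hxx.2
    have hy : y ≠ v0 := hyy.2
    simp only [f, dif_neg hx, dif_neg hy, Sym2.eq_iff] at hxy
    rcases hxy with ⟨_, h⟩ | ⟨h1, h2⟩
    · exact h
    · exfalso
      have hxs := (key x hx).choose_spec.2
      have hys := (key y hy).choose_spec.2
      rw [h1] at hxs
      rw [← h2] at hys
      omega

end helpers

theorem stmt_2 {V : Type*} [Fintype V] [DecidableEq V] (G : SimpleGraph V)
    [DecidableRel G.Adj] (hG : G.Connected) (hn : 4 ≤ Fintype.card V) :
    sumBalaban G ≥ 2 * Real.sqrt ((Fintype.card V : ℝ) / ((Fintype.card V : ℝ) - 1)) := by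
  classical
  set n := Fintype.card V with hnn
  set m := G.edgeFinset.card with hmm
  have hmn : n - 1 ≤ m := card_le_edges hG
  set N : ℝ := (n : ℝ) with hN
  set M : ℝ := (m : ℝ) with hM
  have hN4 : (4 : ℝ) ≤ N := by rw [hN]; exact_mod_cast hn
  have hMN : N - 1 ≤ M := by
    rw [hM, hN]
    have : ((n - 1 : ℕ) : ℝ) ≤ (m : ℝ) := by exact_mod_cast hmn
    rw [Nat.cast_sub (by omega)] at this
    simpa using this
  have hD : (0 : ℝ) < Real.sqrt (N * (N - 1)) := by
    apply Real.sqrt_pos.mpr; nlinarith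
  -- each edge term is at least 1 / sqrt (N (N-1))
  have hterm : ∀ e ∈ G.edgeFinset, 1 / Real.sqrt (N * (N - 1)) ≤ edgeTerm G e := by
    intro e he
    induction e using Sym2.ind with
    | _ u v =>
      rw [SimpleGraph.mem_edgeFinset, SimpleGraph.mem_edgeSet] at he
      have hteq : edgeTerm G s(u, v)
          = 1 / Real.sqrt ((transmission G u : ℝ) + transmission G v) := rfl
      rw [hteq]
      have hdistuv : G.dist u v = 1 := SimpleGraph.dist_eq_one_iff_adj.mpr he
      have h1u : 1 ≤ transmission G u := by
        calc 1 = G.dist u v := hdistuv.symm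
          _ ≤ ∑ x, G.dist u x :=
            Finset.single_le_sum (f := fun x => G.dist u x)
              (fun i _ => Nat.zero_le _) (Finset.mem_univ v)
      have h2u := two_transmission_le hG u
      have h2v := two_transmission_le hG v
      rw [← hnn] at h2u h2v
      have hsumnat : transmission G u + transmission G v ≤ n * (n - 1) := by omega
      have hcast : ((transmission G u : ℝ) + transmission G v) ≤ N * (N - 1) := by
        rw [hN]
        have h' : ((transmission G u + transmission G v : ℕ) : ℝ) ≤ ((n * (n - 1) : ℕ) : ℝ) := by
          exact_mod_cast hsumnat
        push_cast [Nat.cast_sub (by omega : 1 ≤ n)] at h'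
        linarith
      have hposw : (0 : ℝ) < (transmission G u : ℝ) + transmission G v := by
        have : (1 : ℝ) ≤ (transmission G u : ℝ) := by exact_mod_cast h1u
        positivity
      apply one_div_le_one_div_of_le
      · exact Real.sqrt_pos.mpr hposw
      · exact Real.sqrt_le_sqrt hcast
  have hsum : M * (1 / Real.sqrt (N * (N - 1))) ≤ ∑ e ∈ G.edgeFinset, edgeTerm G e := by
    have := Finset.card_nsmul_le_sum G.edgeFinset (edgeTerm G)
      (1 / Real.sqrt (N * (N - 1))) hterm
    rwa [nsmul_eq_mul] at this
  have hden : (0 : ℝ) < M - N + 2 := by linarith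
  have hC : (0 : ℝ) ≤ M / (M - N + 2) := by positivity
  have hfact : 2 * Real.sqrt (N / (N - 1))
      ≤ (M / (M - N + 2)) * (M * (1 / Real.sqrt (N * (N - 1)))) := by
    have hsq : Real.sqrt (N / (N - 1)) = N / Real.sqrt (N * (N - 1)) := by
      have hne : N - 1 ≠ 0 := by nlinarith
      rw [show N / (N - 1) = N ^ 2 / (N * (N - 1)) by field_simp,
        Real.sqrt_div (by positivity), Real.sqrt_sq (by linarith)]
    rw [hsq]
    have hgoal : 2 * N ≤ M / (M - N + 2) * M := by
      rw [div_mul_eq_mul_div, le_div_iff₀ hden]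
      nlinarith [sq_nonneg (M - N)]
    calc 2 * (N / Real.sqrt (N * (N - 1)))
        = (2 * N) * (1 / Real.sqrt (N * (N - 1))) := by ring
      _ ≤ (M / (M - N + 2) * M) * (1 / Real.sqrt (N * (N - 1))) := by
          apply mul_le_mul_of_nonneg_right hgoal
          positivity
      _ = (M / (M - N + 2)) * (M * (1 / Real.sqrt (N * (N - 1)))) := by ring
  have : (M / (M - N + 2)) * (M * (1 / Real.sqrt (N * (N - 1))))
      ≤ sumBalaban G := by
    unfold sumBalaban
    exact mul_le_mul_of_nonneg_left hsum hC
  linarith
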